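/- (Two-round adversary success rate) Let β = B/(k|P|), and suppose q_1, q_2 ≥ 0 with q_1 + q_2 = 1. The optimal adversary success rate is: P_adv = max{ q_1·β, (2/3)·β } when β ≤ 1, and P_adv = max{ q_1 + 2(β−1)·q_2, (2/3)·β } when 1 ≤ β ≤ 3/2, where the formula (2/3)β comes from the strategy (2/3, 1/3) and the other term from the b_1-maximizing strategy. -/

import Mathlib

/-- two-round adversary success rate. With `β = B/(k|P|)`,
success probability of strategy `(b₁,b₂) ∈ F` equal to `β(q₁b₁ + 2q₂b₂)`,
the optimal success rate is `max{q₁β, (2/3)β}` when `β ≤ 1`, and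
`max{q₁ + 2(β−1)q₂, (2/3)β}` when `1 ≤ β ≤ 3/2`. -/
theorem stmt_15 (β : ℝ) (hβ : 0 < β)
    (q₁ q₂ : ℝ) (hq₁ : 0 ≤ q₁) (hq₂ : 0 ≤ q₂) (hq : q₁ + q₂ = 1)
    (F : Set (ℝ × ℝ))
    (hF : F = {b : ℝ × ℝ | b.1 + b.2 = 1 ∧ 0 ≤ b.1 ∧ b.1 ≤ min 1 (1 / β) ∧
      0 ≤ b.2 ∧ b.2 ≤ b.1 / 2}) :
    (β ≤ 1 → IsGreatest ((fun b : ℝ × ℝ => β * (q₁ * b.1 + 2 * q₂ * b.2)) '' F)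
      (max (q₁ * β) (2 / 3 * β))) ∧
    (1 ≤ β → β ≤ 3 / 2 →
      IsGreatest ((fun b : ℝ × ℝ => β * (q₁ * b.1 + 2 * q₂ * b.2)) '' F)
        (max (q₁ + 2 * (β - 1) * q₂) (2 / 3 * β))) := by
  subst hF
  constructor
  · intro hβ1
    have h1β : 1 ≤ 1 / β := by rw [le_div_iff₀ hβ]; linarith
    constructor
    · rcases le_total (q₁ * β) (2 / 3 * β) with h | h
      · rw [max_eq_right h]
        refine ⟨(2/3, 1/3), ⟨by norm_num, by norm_num,
          le_min (by norm_num) (by linarith), by norm_num, by norm_num⟩, ?_⟩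
        simp only
        ring_nf
        nlinarith
      · rw [max_eq_left h]
        refine ⟨(1, 0), ⟨by norm_num, by norm_num,
          le_min le_rfl h1β, le_rfl, by norm_num⟩, ?_⟩
        simp only
        ring
    · rintro v ⟨⟨b₁, b₂⟩, ⟨hsum, hb₁, hb₁le, hb₂, hb₂le⟩, rfl⟩
      simp only at *
      have hb₁1 : b₁ ≤ 1 := le_trans hb₁le (min_le_left _ _)
      have hb₁23 : 2/3 ≤ b₁ := by linarith
      have hb₂' : b₂ = 1 - b₁ := by linarith
      rw [hb₂']
      rcases le_total (2 * q₂) q₁ with h | h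
      · refine le_trans ?_ (le_max_left _ _)
        nlinarith [mul_nonneg (mul_nonneg hβ.le (sub_nonneg.2 h)) (sub_nonneg.2 hb₁1)]
      · refine le_trans ?_ (le_max_right _ _)
        nlinarith [mul_nonneg (mul_nonneg hβ.le (sub_nonneg.2 h)) (sub_nonneg.2 hb₁23)]
  · intro hβ1 hβ32
    have h1β : 1 / β ≤ 1 := by rw [div_le_one hβ]; linarith
    have h23β : 2/3 ≤ 1/β := by rw [le_div_iff₀ hβ]; linarith
    constructor
    · rcases le_total (q₁ + 2 * (β - 1) * q₂) (2 / 3 * β) with h | h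
      · rw [max_eq_right h]
        refine ⟨(2/3, 1/3), ⟨by norm_num, by norm_num,
          le_min (by norm_num) h23β, by norm_num, by norm_num⟩, ?_⟩
        simp only
        ring_nf
        nlinarith
      · rw [max_eq_left h]
        refine ⟨(1/β, 1 - 1/β), ⟨by ring, by positivity,
          le_min h1β le_rfl, by linarith, ?_⟩, ?_⟩
        · simp only
          linarith
        · simp only
          field_simp
    · rintro v ⟨⟨b₁, b₂⟩, ⟨hsum, hb₁, hb₁le, hb₂, hb₂le⟩, rfl⟩
      simp only at *
      have hb₁β : β * b₁ ≤ 1 := by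
        have := le_trans hb₁le (min_le_right _ _)
        rw [le_div_iff₀ hβ] at this; linarith
      have hb₁23 : 2/3 ≤ b₁ := by linarith
      have hb₂' : b₂ = 1 - b₁ := by linarith
      rw [hb₂']
      rcases le_total (2 * q₂) q₁ with h | h
      · refine le_trans ?_ (le_max_left _ _)
        nlinarith [mul_nonneg (sub_nonneg.2 h) (sub_nonneg.2 hb₁β)]
      · refine le_trans ?_ (le_max_right _ _)
        nlinarith [mul_nonneg (mul_nonneg hβ.le (sub_nonneg.2 h)) (sub_nonneg.2 hb₁23)]
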